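/- Let X be a finite set, let τ be a fixed-point-free involutive permutation of X, and let A, B ⊆ X satisfy τ(A) = A and τ(B) = B. Then π_B ∘ π_A = π_{Δ(A,B)}, where Δ(A,B) = (A ∪ B) \ (A ∩ B) is the symmetric difference; consequently, for every permutation σ of X, the partial dual relative to B of the partial dual of (σ, τ) relative to A equals the partial dual of (σ, τ) relative to Δ(A,B). (Lemma 2.3(c) expressed via rotation systems.) -/
import Mathlib


/-- The partial-duality permutation `π_A` of a rotation system: it agrees with the
edge involution `τ` on the τ-invariant set `A` of half-edges and is the identity
off `A`. -/
def piPerm {X : Type*} [DecidableEq X] (τ : Equiv.Perm X) (A : Finset X)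
    (hτ : ∀ x, τ (τ x) = x) (hA : A.image τ = A) : Equiv.Perm X where
  toFun x := if x ∈ A then τ x else x
  invFun x := if x ∈ A then τ x else x
  left_inv x := by
    by_cases hx : x ∈ A
    · have hτx : τ x ∈ A := by rw [← hA]; exact Finset.mem_image_of_mem τ hx
      simp [hx, hτx, hτ]
    · simp [hx]
  right_inv x := by
    by_cases hx : x ∈ A
    · have hτx : τ x ∈ A := by rw [← hA]; exact Finset.mem_image_of_mem τ hx
      simp [hx, hτx, hτ]
    · simp [hx]

theorem mem_iff_of_image_eq {X : Type*} [DecidableEq X] (τ : Equiv.Perm X)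
    (hτ : ∀ x, τ (τ x) = x) (A : Finset X) (hA : A.image τ = A) (x : X) :
    τ x ∈ A ↔ x ∈ A := by
  constructor
  · intro h
    have h2 := Finset.mem_image_of_mem τ h
    rw [hA] at h2; rwa [hτ] at h2
  · intro h
    rw [← hA]; exact Finset.mem_image_of_mem τ h

theorem symmdiff_image {X : Type*} [DecidableEq X] (τ : Equiv.Perm X)
    (hτ : ∀ x, τ (τ x) = x) (A B : Finset X)
    (hA : A.image τ = A) (hB : B.image τ = B) :
    ((A ∪ B) \ (A ∩ B)).image τ = (A ∪ B) \ (A ∩ B) := by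
  ext y
  simp only [Finset.mem_image, Finset.mem_sdiff, Finset.mem_union, Finset.mem_inter]
  constructor
  · rintro ⟨x, hx, rfl⟩
    rw [mem_iff_of_image_eq τ hτ A hA, mem_iff_of_image_eq τ hτ B hB]
    exact hx
  · intro hy
    refine ⟨τ y, ?_, hτ y⟩
    rw [mem_iff_of_image_eq τ hτ A hA y, mem_iff_of_image_eq τ hτ B hB y]
    exact hy

/-- **Lemma 2.3(c) via rotation systems.**  If `τ` is a fixed-point-free involution on
the finite set `X` of half-edges and `A, B ⊆ X` are τ-invariant, then
`π_B ∘ π_A = π_{Δ(A,B)}` where `Δ(A,B) = (A ∪ B) \ (A ∩ B)` is the symmetric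
difference; consequently, for every rotation `σ`, the partial dual relative to `B`
of the partial dual of `(σ, τ)` relative to `A` equals the partial dual of `(σ, τ)`
relative to `Δ(A,B)`. -/
theorem partial_duality_symmDiff {X : Type*} [Fintype X] [DecidableEq X]
    (τ : Equiv.Perm X) (hτ : ∀ x, τ (τ x) = x) (hfp : ∀ x, τ x ≠ x)
    (A B : Finset X) (hA : A.image τ = A) (hB : B.image τ = B) :
    piPerm τ B hτ hB * piPerm τ A hτ hA =
        piPerm τ ((A ∪ B) \ (A ∩ B)) hτ (symmdiff_image τ hτ A B hA hB) ∧
      ∀ σ : Equiv.Perm X,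
        (piPerm τ B hτ hB * (piPerm τ A hτ hA * σ), τ) =
          (piPerm τ ((A ∪ B) \ (A ∩ B)) hτ (symmdiff_image τ hτ A B hA hB) * σ, τ) := by
  have key : piPerm τ B hτ hB * piPerm τ A hτ hA =
      piPerm τ ((A ∪ B) \ (A ∩ B)) hτ (symmdiff_image τ hτ A B hA hB) := by
    ext x
    simp only [Equiv.Perm.mul_apply, piPerm, Equiv.coe_fn_mk,
      Finset.mem_sdiff, Finset.mem_union, Finset.mem_inter]
    by_cases hxA : x ∈ A
    · have hτA : τ x ∈ A := (mem_iff_of_image_eq τ hτ A hA x).mpr hxA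
      by_cases hxB : x ∈ B
      · have hτB : τ x ∈ B := (mem_iff_of_image_eq τ hτ B hB x).mpr hxB
        simp [hxA, hxB, hτB, hτ]
      · have hτB : τ x ∉ B := fun h => hxB ((mem_iff_of_image_eq τ hτ B hB x).mp h)
        simp [hxA, hxB, hτB]
    · by_cases hxB : x ∈ B
      · simp [hxA, hxB]
      · simp [hxA, hxB]
  exact ⟨key, fun σ => by rw [← mul_assoc, key]⟩
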